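/- Assume 2(t0+t1) is not a nonpositive integer. Then for every m ∈ ℤ≥0 there exists a unique monic polynomial p_m of degree m such that Y p_m = γ_m·p_m (the non-symmetric Wilson polynomial of degree m). -/

import Mathlib

open Polynomial

namespace NSWilson

noncomputable def QQ : Polynomial ℂ := (1 - 2*X) * (2*X)

noncomputable def MM (a b c d : ℂ) (f : Polynomial ℂ) : Polynomial ℂ :=
  2*X*(C c - X)*(C d - X)*(f.comp (1 - X) - f)
  + (1 - 2*X)*(C a + X)*(C b + X)*(f.comp (-X) - f)

lemma degree_QQ : QQ.degree = 2 := by unfold QQ; compute_degree!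

lemma QQ_ne_zero : QQ ≠ 0 := by
  intro h; have := degree_QQ; rw [h] at this; simp at this

lemma star (t0 t1 a b c d : ℂ) (T0 T1 : Polynomial ℂ → Polynomial ℂ)
    (hT0 : ∀ (f : Polynomial ℂ) (x : ℂ),
      (1 - 2*x) * ((T0 f).eval x - t0 * f.eval x) =
        (c - x) * (d - x) * (f.eval (1 - x) - f.eval x))
    (hT1 : ∀ (f : Polynomial ℂ) (x : ℂ),
      (2*x) * ((T1 f).eval x - t1 * f.eval x) =
        (a + x) * (b + x) * (f.eval (-x) - f.eval x))
    (f : Polynomial ℂ) :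
    QQ * (T0 f + T1 f - C (t0+t1) * f) = MM a b c d f := by
  apply Polynomial.funext
  intro x
  have h0 := hT0 f x
  have h1 := hT1 f x
  simp only [QQ, MM, eval_mul, eval_add, eval_sub, eval_comp, eval_C, eval_X, eval_one,
    eval_ofNat, eval_neg]
  linear_combination (2*x) * h0 + (1-2*x) * h1

lemma structural (a b c d : ℂ) (j : ℕ) (lam w : ℂ) (hw : w = (-1)^(j+1)) :
    MM a b c d (X^(j+1)) - QQ * (C lam * X^(j+1))
      = C 2 * (X^3 * (1-X)^(j+1)) + C (-(2*(c+d))) * (X^2 * (1-X)^(j+1))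
        + C (2*c*d) * (X * (1-X)^(j+1))
        + C (-2 - 2*(w-1)) * X^(j+4)
        + C (2*(c+d) + (w-1)*(1-2*(a+b)) + 4*lam) * X^(j+3)
        + C (-(2*c*d) + (w-1)*(a+b-2*a*b) - 2*lam) * X^(j+2)
        + C ((w-1)*a*b) * X^(j+1) := by
  have hneg : ((-X : Polynomial ℂ))^(j+1) = C w * X^(j+1) := by
    rw [neg_pow, hw]
    simp only [map_mul, map_pow, C_neg, C_1]
  have hc1 : ((X : Polynomial ℂ)^(j+1)).comp (1 - X) = (1 - X)^(j+1) := X_pow_comp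
  have hc2 : ((X : Polynomial ℂ)^(j+1)).comp (-X) = (-X)^(j+1) := X_pow_comp
  rw [MM, QQ, hc1, hc2, hneg]
  simp only [map_mul, map_add, map_sub, C_neg, C_1, map_ofNat]
  set P := (1 - X : Polynomial ℂ)^(j+1) with hP
  ring

lemma coeff_one_sub_pow (k i : ℕ) :
    ((1 - X : Polynomial ℂ)^k).coeff i = (-1)^k * ((-1)^(k-i) * (k.choose i)) := by
  have h : (1 - X : Polynomial ℂ) = C (-1) * (X + C (-1)) := by
    simp only [C_neg, C_1]; ring
  rw [h, mul_pow, ← C_pow, coeff_C_mul, coeff_X_add_C_pow]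

lemma natDegree_one_sub_pow_le (k : ℕ) : ((1 - X : Polynomial ℂ)^k).natDegree ≤ k := by
  refine natDegree_pow_le.trans ?_
  have : (1 - X : Polynomial ℂ) = -(X - C 1) := by simp only [C_1]; ring
  rw [this, natDegree_neg, natDegree_X_sub_C]; omega

lemma Pcoeff_self (j : ℕ) : ((1 - X : Polynomial ℂ)^(j+1)).coeff (j+1) = (-1)^(j+1) := by
  rw [coeff_one_sub_pow]
  simp [Nat.choose_self]

lemma Pcoeff_pred (j : ℕ) : ((1 - X : Polynomial ℂ)^(j+1)).coeff j = (-1)^j * (j+1) := by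
  rw [coeff_one_sub_pow, show j+1-j = 1 by omega, Nat.choose_succ_self_right]
  push_cast
  ring

set_option maxHeartbeats 1000000 in
lemma shape_deg (j : ℕ) (P : Polynomial ℂ) (hPd : P.natDegree ≤ j+1)
    (e3 e2 e1 d4 d3 d2 d1 : ℂ)
    (h4 : e3 * P.coeff (j+1) + d4 = 0)
    (h3 : e3 * P.coeff j + e2 * P.coeff (j+1) + d3 = 0) :
    (C e3 * (X^3 * P) + C e2 * (X^2 * P) + C e1 * (X * P)
      + C d4 * X^(j+4) + C d3 * X^(j+3) + C d2 * X^(j+2) + C d1 * X^(j+1)).degree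
      < ((j+3 : ℕ) : WithBot ℕ) := by
  have hPhi : ∀ i, j+1 < i → P.coeff i = 0 := fun i hi =>
    coeff_eq_zero_of_natDegree_lt (lt_of_le_of_lt hPd hi)
  have hb : ∀ (e : ℂ) (i : ℕ), i ≤ 3 → (C e * (X^i * P)).natDegree ≤ j+4 := by
    intro e i hi
    have h1 : (C e * (X^i * P)).natDegree ≤ (C e).natDegree + ((X:Polynomial ℂ)^i * P).natDegree :=
      natDegree_mul_le
    have h2 : ((X:Polynomial ℂ)^i * P).natDegree ≤ ((X:Polynomial ℂ)^i).natDegree + P.natDegree :=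
      natDegree_mul_le
    simp only [natDegree_C, natDegree_X_pow] at h1 h2
    omega
  have hm : ∀ (e : ℂ) (i : ℕ), i ≤ j+4 → (C e * (X : Polynomial ℂ)^i).natDegree ≤ j+4 := by
    intro e i hi
    have h1 : (C e * (X:Polynomial ℂ)^i).natDegree
        ≤ (C e).natDegree + ((X:Polynomial ℂ)^i).natDegree := natDegree_mul_le
    simp only [natDegree_C, natDegree_X_pow] at h1
    omega
  have hnd : (C e3 * (X^3 * P) + C e2 * (X^2 * P) + C e1 * (X * P)
      + C d4 * X^(j+4) + C d3 * X^(j+3) + C d2 * X^(j+2) + C d1 * X^(j+1)).natDegree ≤ j+4 := by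
    have t7 : (C e3 * ((X:Polynomial ℂ)^3 * P)).natDegree ≤ j+4 := hb e3 3 le_rfl
    have t6 : (C e2 * ((X:Polynomial ℂ)^2 * P)).natDegree ≤ j+4 := hb e2 2 (by omega)
    have t5 : (C e1 * ((X:Polynomial ℂ) * P)).natDegree ≤ j+4 := by
      simpa [pow_one] using hb e1 1 (by omega)
    have t4 : (C d4 * (X:Polynomial ℂ)^(j+4)).natDegree ≤ j+4 := hm d4 (j+4) le_rfl
    have t3 : (C d3 * (X:Polynomial ℂ)^(j+3)).natDegree ≤ j+4 := hm d3 (j+3) (by omega)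
    have t2 : (C d2 * (X:Polynomial ℂ)^(j+2)).natDegree ≤ j+4 := hm d2 (j+2) (by omega)
    have t1 : (C d1 * (X:Polynomial ℂ)^(j+1)).natDegree ≤ j+4 := hm d1 (j+1) (by omega)
    refine (natDegree_add_le _ _).trans ?_
    refine max_le ((natDegree_add_le _ _).trans ?_) t1
    refine max_le ((natDegree_add_le _ _).trans ?_) t2
    refine max_le ((natDegree_add_le _ _).trans ?_) t3
    refine max_le ((natDegree_add_le _ _).trans ?_) t4
    refine max_le ((natDegree_add_le _ _).trans ?_) t5
    exact max_le t7 t6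
  rw [degree_lt_iff_coeff_zero]
  intro N hN
  have hN' : (j+3 : ℕ) ≤ N := by exact_mod_cast hN
  rcases (by omega : N = j+3 ∨ N = j+4 ∨ j+4 < N) with h | h | h
  · subst h
    have f1 : ((X : Polynomial ℂ)^3 * P).coeff (j+3) = P.coeff j := coeff_X_pow_mul P 3 j
    have f2 : ((X : Polynomial ℂ)^2 * P).coeff (j+3) = P.coeff (j+1) := coeff_X_pow_mul P 2 (j+1)
    have f3 : ((X : Polynomial ℂ) * P).coeff (j+3) = P.coeff (j+2) := coeff_X_mul P (j+2)
    simp only [coeff_add, coeff_C_mul, f1, f2, f3, hPhi (j+2) (by omega), coeff_X_pow]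
    norm_num
    linear_combination h3
  · subst h
    have f1 : ((X : Polynomial ℂ)^3 * P).coeff (j+4) = P.coeff (j+1) := coeff_X_pow_mul P 3 (j+1)
    have f2 : ((X : Polynomial ℂ)^2 * P).coeff (j+4) = P.coeff (j+2) := coeff_X_pow_mul P 2 (j+2)
    have f3 : ((X : Polynomial ℂ) * P).coeff (j+4) = P.coeff (j+3) := coeff_X_mul P (j+3)
    simp only [coeff_add, coeff_C_mul, f1, f2, f3, hPhi (j+2) (by omega),
      hPhi (j+3) (by omega), coeff_X_pow]
    norm_num
    linear_combination h4
  · exact coeff_eq_zero_of_natDegree_lt (lt_of_le_of_lt hnd h)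

lemma deg_from_QQ (g : Polynomial ℂ) (j : ℕ)
    (hd : (QQ * g).degree < ((j+3 : ℕ) : WithBot ℕ)) :
    g.degree < ((j+1 : ℕ) : WithBot ℕ) := by
  by_cases hg : g = 0
  · rw [hg, degree_zero]; exact WithBot.bot_lt_coe _
  · rw [degree_mul, degree_QQ, degree_eq_natDegree hg] at hd
    rw [degree_eq_natDegree hg]
    have h3 : 2 + g.natDegree < j + 3 := by exact_mod_cast hd
    exact_mod_cast (by omega : g.natDegree < j+1)

end NSWilson

open NSWilson

set_option maxHeartbeats 1000000 in
/-- If `2(t0+t1)` is not a nonpositive integer, then for every `m ∈ ℤ≥0`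
there exists a unique monic polynomial `p_m` of degree `m` with `Y p_m = γ_m·p_m`. -/
theorem statement3 (t0 u0 t1 u1 a b c d : ℂ)
    (ha : a = t1 + u1) (hb : b = t1 - u1)
    (hc : c = t0 + u0 + 1/2) (hd : d = t0 - u0 + 1/2)
    (hreg : ∀ k : ℕ, 2*(t0 + t1) ≠ -(k : ℂ))
    (T0 T1 : Polynomial ℂ → Polynomial ℂ)
    (hT0 : ∀ (f : Polynomial ℂ) (x : ℂ),
      (1 - 2*x) * ((T0 f).eval x - t0 * f.eval x) =
        (c - x) * (d - x) * (f.eval (1 - x) - f.eval x))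
    (hT1 : ∀ (f : Polynomial ℂ) (x : ℂ),
      (2*x) * ((T1 f).eval x - t1 * f.eval x) =
        (a + x) * (b + x) * (f.eval (-x) - f.eval x))
    (γ : ℕ → ℂ)
    (hγe : ∀ n : ℕ, γ (2*n) = t0 + t1 + n)
    (hγo : ∀ n : ℕ, γ (2*n+1) = -(t0 + t1 + (n+1))) :
    ∀ m : ℕ, ∃! p : Polynomial ℂ,
      p.Monic ∧ p.natDegree = m ∧ T0 p + T1 p = γ m • p := by
  have hcd : c + d = 2*t0 + 1 := by rw [hc, hd]; ring
  have hab : a + b = 2*t1 := by rw [ha, hb]; ring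
  have hstar := star t0 t1 a b c d T0 T1 hT0 hT1
  -- γ is injective
  have hrepr : ∀ i : ℕ, (∃ p, i = 2*p) ∨ (∃ p, i = 2*p+1) := by
    intro i
    rcases Nat.even_or_odd i with ⟨p, hp⟩ | ⟨p, hp⟩
    · exact Or.inl ⟨p, by omega⟩
    · exact Or.inr ⟨p, hp⟩
  have hinj : ∀ i j : ℕ, γ i = γ j → i = j := by
    intro i j hij
    rcases hrepr i with ⟨p, rfl⟩ | ⟨p, rfl⟩ <;> rcases hrepr j with ⟨q, rfl⟩ | ⟨q, rfl⟩
    · rw [hγe p, hγe q] at hij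
      have : (p : ℂ) = q := by linear_combination hij
      have : p = q := by exact_mod_cast this
      omega
    · rw [hγe p, hγo q] at hij
      exact absurd (by push_cast; linear_combination hij) (hreg (p+q+1))
    · rw [hγo p, hγe q] at hij
      exact absurd (by push_cast; linear_combination -hij) (hreg (q+p+1))
    · rw [hγo p, hγo q] at hij
      have : (p : ℂ) = q := by linear_combination -hij
      have : p = q := by exact_mod_cast this
      omega
  -- the operator as a linear map
  set Y : Polynomial ℂ → Polynomial ℂ := fun f => T0 f + T1 f with hY
  have Yadd : ∀ f g : Polynomial ℂ, Y (f+g) = Y f + Y g := by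
    intro f g
    show T0 (f+g) + T1 (f+g) = (T0 f + T1 f) + (T0 g + T1 g)
    have h := hstar (f+g)
    have h1 := hstar f
    have h2 := hstar g
    have hM : MM a b c d (f+g) = MM a b c d f + MM a b c d g := by
      simp only [MM, add_comp]; ring
    have key : QQ * ((T0 (f+g) + T1 (f+g)) - ((T0 f + T1 f) + (T0 g + T1 g))) = 0 := by
      linear_combination h - h1 - h2 + hM
    exact sub_eq_zero.mp ((mul_eq_zero.mp key).resolve_left QQ_ne_zero)
  have Ysmul : ∀ (s : ℂ) (f : Polynomial ℂ), Y (C s * f) = C s * Y f := by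
    intro s f
    show T0 (C s * f) + T1 (C s * f) = C s * (T0 f + T1 f)
    have h := hstar (C s * f)
    have h1 := hstar f
    have hM : MM a b c d (C s * f) = C s * MM a b c d f := by
      simp only [MM, mul_comp, C_comp]; ring
    have key : QQ * ((T0 (C s * f) + T1 (C s * f)) - C s * (T0 f + T1 f)) = 0 := by
      linear_combination h - C s * h1 + hM
    exact sub_eq_zero.mp ((mul_eq_zero.mp key).resolve_left QQ_ne_zero)
  -- triangularity on monomials
  have key : ∀ k : ℕ, (Y (X^k) - C (γ k) * X^k).degree < (k : WithBot ℕ) := by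
    intro k
    have hCk : C (γ k) = C (t0+t1) + C (γ k - (t0+t1)) := by
      rw [← C_add]; congr 1; ring
    have hg : QQ * (Y (X^k) - C (γ k) * X^k)
        = MM a b c d (X^k) - QQ * (C (γ k - (t0+t1)) * X^k) := by
      show QQ * (T0 (X^k) + T1 (X^k) - C (γ k) * X^k)
          = MM a b c d (X^k) - QQ * (C (γ k - (t0+t1)) * X^k)
      linear_combination hstar (X^k) - QQ * X^k * hCk
    rcases (by omega : k = 0 ∨ 1 ≤ k) with rfl | hk1
    · have hγ0 : γ 0 = t0 + t1 := by simpa using hγe 0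
      have hM0 : MM a b c d ((X : Polynomial ℂ)^0) = 0 := by
        simp [MM, X_pow_comp]
      have hlam0 : C (γ 0 - (t0+t1)) = (0 : Polynomial ℂ) := by
        rw [hγ0]; simp
      rw [hM0, hlam0] at hg
      simp only [zero_mul, mul_zero, sub_zero, zero_sub, mul_eq_zero] at hg
      have : Y ((X : Polynomial ℂ)^0) - C (γ 0) * X^0 = 0 := by
        rcases hg with h | h
        · exact absurd h QQ_ne_zero
        · exact h
      rw [this, degree_zero]
      exact WithBot.bot_lt_coe _
    · obtain ⟨j, rfl⟩ : ∃ j, k = j + 1 := ⟨k - 1, by omega⟩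
      set lam := γ (j+1) - (t0+t1) with hlam
      -- the scalar identity, by parity of j
      have h2 : 2*((-1:ℂ)^j*(j+1)) + 2*(c+d)*(-1:ℂ)^j + 2*(c+d)
          + ((-1:ℂ)^(j+1)-1)*(1-2*(a+b)) + 4*lam = 0 := by
        rcases hrepr j with ⟨p, rfl⟩ | ⟨p, rfl⟩
        · -- j = 2p, k odd
          have hp1 : ((-1:ℂ))^(2*p) = 1 := by rw [pow_mul]; norm_num
          have hp2 : ((-1:ℂ))^(2*p+1) = -1 := by rw [pow_succ, hp1]; ring
          rw [hp1, hp2, hlam, hγo p]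
          push_cast
          linear_combination 4*hcd + 4*hab
        · -- j = 2p+1, k = 2p+2 even
          have hp1 : ((-1:ℂ))^(2*p+1) = -1 := by
            rw [pow_succ, pow_mul]; norm_num
          have hp2 : ((-1:ℂ))^(2*p+1+1) = 1 := by rw [pow_succ, hp1]; ring
          have hγk : γ (2*p+1+1) = t0 + t1 + (p+1 : ℕ) := by
            have := hγe (p+1)
            rw [show 2*(p+1) = 2*p+1+1 by omega] at this
            exact this
          rw [hp1, hp2, hlam, hγk]
          push_cast
          ring
      have hMdeg : (MM a b c d (X^(j+1)) - QQ * (C lam * X^(j+1))).degree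
          < ((j+3 : ℕ) : WithBot ℕ) := by
        rw [structural a b c d j lam ((-1)^(j+1)) rfl]
        apply shape_deg j _ (natDegree_one_sub_pow_le (j+1))
        · rw [Pcoeff_self]; ring
        · rw [Pcoeff_self, Pcoeff_pred]
          linear_combination h2
      have := deg_from_QQ _ j (by rw [hg]; exact hMdeg)
      exact_mod_cast this
  -- coefficient/degree behaviour on general polynomials
  have Ysum : ∀ (n : ℕ) (f : Polynomial ℂ), f.natDegree ≤ n →
      Y f = ∑ i ∈ Finset.range (n+1), C (f.coeff i) * Y (X^i) := by
    intro n f hf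
    have hrep : f = ∑ i ∈ Finset.range (n+1), C (f.coeff i) * X^i := by
      conv_lhs => rw [as_sum_range' f (n+1) (by omega)]
      simp [C_mul_X_pow_eq_monomial]
    have hYsum : ∀ (s : Finset ℕ) (g : ℕ → Polynomial ℂ),
        Y (∑ i ∈ s, C (f.coeff i) * g i) = ∑ i ∈ s, C (f.coeff i) * Y (g i) := by
      intro s g
      induction s using Finset.induction_on with
      | empty =>
        simp only [Finset.sum_empty]
        have h0 : Y ((0:Polynomial ℂ)) = C (0:ℂ) * Y 0 := by
          have := Ysmul 0 0
          simpa using this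
        simpa using h0
      | insert _ _ hx ih =>
        rw [Finset.sum_insert hx, Finset.sum_insert hx, Yadd, ih, ← Ysmul]
    conv_lhs => rw [hrep]
    exact hYsum _ _
  have coeffY : ∀ (f : Polynomial ℂ) (n : ℕ), f.natDegree ≤ n →
      (Y f).degree ≤ (n : WithBot ℕ) ∧ (Y f).coeff n = γ n * f.coeff n := by
    intro f n hf
    rw [Ysum n f hf]
    have hYi : ∀ i, Y (X^i) = C (γ i) * X^i + (Y (X^i) - C (γ i) * X^i) := by
      intro i; ring
    constructor
    · refine (degree_sum_le _ _).trans ?_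
      rw [Finset.sup_le_iff]
      intro i hi
      have hii : (i : WithBot ℕ) ≤ (n : WithBot ℕ) := by
        exact_mod_cast Nat.le_of_lt_succ (Finset.mem_range.mp hi)
      calc (C (f.coeff i) * Y (X^i)).degree
          ≤ (C (f.coeff i)).degree + (Y (X^i)).degree := degree_mul_le _ _
        _ ≤ 0 + (Y (X^i)).degree := add_le_add degree_C_le le_rfl
        _ = (Y (X^i)).degree := zero_add _
        _ ≤ (i : WithBot ℕ) := by
            rw [hYi i]
            refine (degree_add_le _ _).trans (max_le (degree_C_mul_X_pow_le _ _) ?_)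
            exact le_of_lt (key i)
        _ ≤ (n : WithBot ℕ) := hii
    · rw [finset_sum_coeff]
      have hterm : ∀ i ∈ Finset.range (n+1),
          (C (f.coeff i) * Y (X^i)).coeff n
            = f.coeff i * (γ i * (if n = i then 1 else 0)) := by
        intro i hi
        have hin : i ≤ n := Nat.le_of_lt_succ (Finset.mem_range.mp hi)
        rw [hYi i, mul_add, coeff_add, coeff_C_mul, coeff_C_mul, coeff_C_mul, coeff_X_pow]
        have hz : (Y (X^i) - C (γ i) * X^i).coeff n = 0 := by
          apply coeff_eq_zero_of_degree_lt
          exact lt_of_lt_of_le (key i) (by exact_mod_cast hin)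
        rw [hz, mul_zero, add_zero]
      rw [Finset.sum_congr rfl hterm]
      simp [Finset.sum_ite_eq]
      ring
  -- uniqueness-driving vanishing lemma
  have vanish : ∀ (m : ℕ) (δ : Polynomial ℂ), δ.degree < (m : WithBot ℕ) →
      Y δ = C (γ m) * δ → δ = 0 := by
    intro m δ hdeg heig
    by_contra hδ
    have hn : δ.natDegree < m := (natDegree_lt_iff_degree_lt hδ).mpr hdeg
    have hc1 := (coeffY δ δ.natDegree le_rfl).2
    rw [heig, coeff_C_mul] at hc1
    have hlc : δ.coeff δ.natDegree ≠ 0 := fun h => hδ (leadingCoeff_eq_zero.mp h)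
    have : γ m = γ δ.natDegree := mul_right_cancel₀ hlc hc1
    have := hinj _ _ this
    omega
  -- solvability below the eigen-degree
  intro m
  have solve : ∀ (dd : ℕ), ∀ s : Polynomial ℂ, s.degree < (dd : WithBot ℕ) → dd ≤ m →
      ∃ q : Polynomial ℂ, q.degree < (dd : WithBot ℕ) ∧ Y q - C (γ m) * q = s := by
    intro dd
    induction dd using Nat.strong_induction_on with
    | _ dd IH =>
      intro s hs hdm
      by_cases hs0 : s = 0
      · refine ⟨0, ?_, ?_⟩
        · rw [degree_zero]; exact WithBot.bot_lt_coe _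
        · have h0 : Y (0 : Polynomial ℂ) = 0 := by
            have := Ysmul 0 0
            simpa using this
          rw [h0, hs0]; ring
      · set n := s.natDegree with hn
        have hnd : n < dd := (natDegree_lt_iff_degree_lt hs0).mpr hs
        have hnm : n < m := by omega
        have hne : γ n - γ m ≠ 0 := sub_ne_zero.mpr (fun h => by
          have := hinj _ _ h; omega)
        set u := s.leadingCoeff / (γ n - γ m) with hu
        set r : Polynomial ℂ := Y (X^n) - C (γ n) * X^n with hr
        have hq1 : Y (C u * X^n) - C (γ m) * (C u * X^n)
            = C s.leadingCoeff * X^n + C u * r := by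
          rw [Ysmul u (X^n), hr]
          have huc0 : u * γ n - γ m * u = s.leadingCoeff := by
            rw [show u * γ n - γ m * u = u * (γ n - γ m) by ring, hu, div_mul_cancel₀ _ hne]
          have huc : C u * C (γ n) - C (γ m) * C u = C s.leadingCoeff := by
            rw [← C_mul, ← C_mul, ← C_sub, huc0]
          linear_combination (X:Polynomial ℂ)^n * huc
        set s' : Polynomial ℂ := s - (C s.leadingCoeff * X^n + C u * r) with hs'
        have hs'deg : s'.degree < (n : WithBot ℕ) := by
          have hlc : s.leadingCoeff ≠ 0 := fun h => hs0 (leadingCoeff_eq_zero.mp h)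
          have h1 : (s - C s.leadingCoeff * X^n).degree < (n : WithBot ℕ) := by
            have := degree_sub_lt (p := s) (q := C s.leadingCoeff * X^n)
              (by rw [degree_C_mul_X_pow n hlc, degree_eq_natDegree hs0])
              hs0
              (by rw [leadingCoeff_C_mul_X_pow])
            rwa [degree_eq_natDegree hs0] at this
          have h2 : (C u * r).degree < (n : WithBot ℕ) := by
            calc (C u * r).degree ≤ (C u).degree + r.degree := degree_mul_le _ _
              _ ≤ 0 + r.degree := add_le_add degree_C_le le_rfl
              _ = r.degree := zero_add _
              _ < (n : WithBot ℕ) := key n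
          have heq : s' = (s - C s.leadingCoeff * X^n) - C u * r := by rw [hs']; ring
          rw [heq]
          exact lt_of_le_of_lt (degree_sub_le _ _) (max_lt h1 h2)
        obtain ⟨q2, hq2d, hq2⟩ := IH n hnd s' hs'deg (by omega)
        refine ⟨C u * X^n + q2, ?_, ?_⟩
        · refine lt_of_le_of_lt (degree_add_le _ _) (max_lt ?_ ?_)
          · exact lt_of_le_of_lt (degree_C_mul_X_pow_le _ _) (by exact_mod_cast hnd)
          · exact lt_trans hq2d (by exact_mod_cast hnd)
        · rw [Yadd]
          linear_combination hq1 + hq2 + hs'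
  -- existence
  have hrm := key m
  obtain ⟨q, hqd, hq⟩ := solve m (-(Y (X^m) - C (γ m) * X^m))
    (by rw [degree_neg]; exact hrm) le_rfl
  set p : Polynomial ℂ := X^m + q with hp
  have hdegq : q.degree < ((X : Polynomial ℂ)^m).degree := by
    rw [degree_X_pow]; exact_mod_cast hqd
  have hdeg' : p.degree = (m : WithBot ℕ) := by
    rw [hp, degree_add_eq_left_of_degree_lt hdegq, degree_X_pow]
  have hpdeg : p.natDegree = m := natDegree_eq_of_degree_eq_some hdeg'
  have hpm : p.Monic := by
    rw [Monic, leadingCoeff, hpdeg, hp, coeff_add, coeff_X_pow, if_pos rfl,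
      coeff_eq_zero_of_degree_lt (by rw [degree_X_pow] at hdegq; exact_mod_cast hdegq)]
    norm_num
  have hpeig : Y p = C (γ m) * p := by
    rw [hp, Yadd]
    linear_combination hq
  refine ⟨p, ⟨hpm, hpdeg, ?_⟩, ?_⟩
  · rw [smul_eq_C_mul]; exact hpeig
  · rintro p' ⟨hm', hd', he'⟩
    have he'' : Y p' = C (γ m) * p' := by
      rw [← smul_eq_C_mul]; exact he'
    have hδeig : Y (p' - p) = C (γ m) * (p' - p) := by
      have hsub : Y (p' - p) = Y p' - Y p := by
        have := Yadd (p' - p) p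
        simp only [sub_add_cancel] at this
        linear_combination -this
      rw [hsub, he'', hpeig]; ring
    have hδdeg : (p' - p).degree < (m : WithBot ℕ) := by
      by_cases hpp : p' = p
      · rw [hpp, sub_self, degree_zero]; exact WithBot.bot_lt_coe _
      · have hdp' : p'.degree = (m : WithBot ℕ) := by
          rw [degree_eq_natDegree hm'.ne_zero, hd']
        have h := degree_sub_lt (p := p') (q := p) (by rw [hdp', hdeg']) hm'.ne_zero
          (by rw [hm'.leadingCoeff, hpm.leadingCoeff])
        rwa [hdp'] at h
    have := vanish m (p' - p) hδdeg hδeig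
    exact sub_eq_zero.mp this
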